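/- For every odd prime p and every positive integer r, the first group cohomology H¹(SL₂(ℤ/p^r), (ℤ/p^r)²) of the tautological module vanishes. -/

import Mathlib

set_option synthInstance.maxHeartbeats 1000000
open Matrix

instance slSMul (n : ℕ) : SMul (SpecialLinearGroup (Fin 2) (ZMod n)) (Fin 2 → ZMod n) :=
  ⟨fun g v => (g : Matrix (Fin 2) (Fin 2) (ZMod n)).mulVec v⟩

lemma slAct_def {n : ℕ} (g : SpecialLinearGroup (Fin 2) (ZMod n)) (v : Fin 2 → ZMod n) :
    g • v = (g : Matrix (Fin 2) (Fin 2) (ZMod n)).mulVec v := rfl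

/-- The tautological action of `SL₂(ℤ/n)` on `(ℤ/n)²`. -/
instance slAct (n : ℕ) : DistribMulAction (SpecialLinearGroup (Fin 2) (ZMod n)) (Fin 2 → ZMod n) where
  one_smul v := by rw [slAct_def]; simp
  mul_smul g h v := by rw [slAct_def, slAct_def, slAct_def]; exact (Matrix.mulVec_mulVec _ _ _).symm
  smul_zero g := Matrix.mulVec_zero _
  smul_add g x y := Matrix.mulVec_add _ x y

/-- A 1-cocycle of a group `G` with values in a `G`-module `M`. -/
def IsCocycle {G M : Type*} [Group G] [AddCommGroup M] [DistribMulAction G M]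
    (f : G → M) : Prop :=
  ∀ g h : G, f (g * h) = f g + g • f h

/-- A 1-coboundary of a group `G` with values in a `G`-module `M`.  A cohomology class in
`H¹(G, M)` is zero precisely when a representing cocycle is a coboundary. -/
def IsCoboundary {G M : Type*} [Group G] [AddCommGroup M] [DistribMulAction G M]
    (f : G → M) : Prop :=
  ∃ m : M, ∀ g : G, f g = g • m - m

open Matrix in
/-- for an odd prime `p` and `r ≥ 1`, `H¹(SL₂(ℤ/p^r), (ℤ/p^r)²) = 0`:
every 1-cocycle of `SL₂(ℤ/p^r)` with values in the tautological module is a coboundary. -/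
theorem stmt_4 (p : ℕ) (hp : p.Prime) (hodd : p ≠ 2) (r : ℕ) (hr : 0 < r)
    (f : SpecialLinearGroup (Fin 2) (ZMod (p ^ r)) → (Fin 2 → ZMod (p ^ r)))
    (hf : IsCocycle f) : IsCoboundary f := by
  haveI : NeZero (p ^ r) := ⟨pow_ne_zero _ hp.pos.ne'⟩
  -- 2 is a unit in ZMod (p^r)
  have hco : Nat.Coprime 2 (p ^ r) := Nat.Coprime.pow_right _ (Nat.coprime_two_left.mpr (hp.odd_of_ne_two hodd))
  have hunit : IsUnit (2 : ZMod (p ^ r)) := by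
    have := (ZMod.unitOfCoprime 2 hco).isUnit
    simpa using this
  have hinv : (2 : ZMod (p ^ r))⁻¹ * 2 = 1 := ZMod.inv_mul_of_unit _ hunit
  -- the central element -1
  set ε : SpecialLinearGroup (Fin 2) (ZMod (p ^ r)) :=
    ⟨-1, by simp [Matrix.det_neg]⟩ with hε
  have hεcoe : (ε : Matrix (Fin 2) (Fin 2) (ZMod (p ^ r))) = -1 := rfl
  have hcomm : ∀ g : SpecialLinearGroup (Fin 2) (ZMod (p ^ r)), ε * g = g * ε := by
    intro g
    apply Subtype.ext
    simp [hεcoe]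
  have hεact : ∀ v : Fin 2 → ZMod (p ^ r), ε • v = -v := by
    intro v
    rw [slAct_def, hεcoe, Matrix.neg_mulVec, Matrix.one_mulVec]
  have key : ∀ g : SpecialLinearGroup (Fin 2) (ZMod (p ^ r)),
      f g + g • f ε = f ε - f g := by
    intro g
    have h1 := hf g ε
    have h2 := hf ε g
    rw [hcomm g] at h2
    rw [h2, hεact] at h1
    rw [← h1, sub_eq_add_neg]
  refine ⟨(-(2⁻¹ : ZMod (p ^ r))) • f ε, fun g => ?_⟩
  have hsm : g • ((-(2⁻¹ : ZMod (p ^ r))) • f ε)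
      = (-(2⁻¹ : ZMod (p ^ r))) • (g • f ε) := by
    rw [slAct_def, slAct_def, Matrix.mulVec_smul]
  rw [hsm]
  have h2fg : (2 : ZMod (p ^ r)) • f g = f ε - g • f ε := by
    rw [two_smul, eq_sub_iff_add_eq]
    calc f g + f g + g • f ε = (f g + g • f ε) + f g := by abel
      _ = (f ε - f g) + f g := by rw [key g]
      _ = f ε := by abel
  calc f g = ((2 : ZMod (p ^ r))⁻¹ * 2) • f g := by rw [hinv, one_smul]
    _ = (2 : ZMod (p ^ r))⁻¹ • ((2 : ZMod (p ^ r)) • f g) := by rw [mul_smul]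
    _ = (2 : ZMod (p ^ r))⁻¹ • (f ε - g • f ε) := by rw [h2fg]
    _ = (-(2⁻¹ : ZMod (p ^ r))) • (g • f ε) - (-(2⁻¹ : ZMod (p ^ r))) • f ε := by
        rw [neg_smul, neg_smul, smul_sub, sub_neg_eq_add, neg_add_eq_sub]
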